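/- For every ℂ-algebra isomorphism φ : Cl ≃ Matrix (Fin 2^r) ℂ, every integer k with 1 ≤ k ≤ 2r, and all indices i_1,...,i_k ∈ {1,...,2r}, the matrix trace of φ(Γ_{[i_1...i_k]}) is zero. -/

import Mathlib

open scoped TensorProduct

noncomputable section

/-- The quadratic form `x₁² + ⋯ + x_{2r}²` on `ℂ^{2r}`. -/
def Qf (r : ℕ) : QuadraticForm ℂ (Fin (2*r) → ℂ) :=
  QuadraticMap.weightedSumSquares ℂ (fun _ : Fin (2*r) => (1:ℂ))

/-- The Clifford algebra of `Qf r`. -/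
abbrev Cl (r : ℕ) := CliffordAlgebra (Qf r)

/-- The generators `Γ_i`. -/
def Γgen (r : ℕ) (i : Fin (2*r)) : Cl r :=
  CliffordAlgebra.ι (Qf r) (Pi.single i 1)

/-- The antisymmetrised products `Γ_{[i₁…i_k]}`. -/
def Γbr (r k : ℕ) (i : Fin k → Fin (2*r)) : Cl r :=
  ((k.factorial : ℂ))⁻¹ •
    ∑ σ : Equiv.Perm (Fin k),
      ((Equiv.Perm.sign σ : ℤ) : ℂ) • (List.ofFn fun j => Γgen r (i (σ j))).prod

/-- The invariants `I_k ∈ Cl ⊗ Cl`. -/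
def Ik (r k : ℕ) : Cl r ⊗[ℂ] Cl r :=
  ∑ i : Fin k → Fin (2*r), (Γbr r k i) ⊗ₜ[ℂ] (Γbr r k i)

/-- The split Casimir element `Ĉ = −I₂/(16(2r−2))`. -/
def sC (r : ℕ) : Cl r ⊗[ℂ] Cl r := (-(16*(2*(r:ℂ)-2))⁻¹) • Ik r 2

/-- The top element `Γ_{2r+1} = (−i)^r Γ₁⋯Γ_{2r}`. -/
def Γtop (r : ℕ) : Cl r :=
  ((-Complex.I)^r) • (List.ofFn fun i : Fin (2*r) => Γgen r i).prod

/-- The chirality projector `p_ε = (1 + ε Γ_{2r+1})/2`. -/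
def pCh (r : ℕ) (ε : ℂ) : Cl r := (2:ℂ)⁻¹ • (1 + ε • Γtop r)

/-- The chirality projectors `p_{εε'} = p_ε ⊗ p_{ε'}`. -/
def ppCh (r : ℕ) (ε ε' : ℂ) : Cl r ⊗[ℂ] Cl r := (pCh r ε) ⊗ₜ[ℂ] (pCh r ε')

/-- The eigenvalues `c_k = (2k(2r−k) − r(2r−1))/(16(r−1))`. -/
def cEv (r k : ℕ) : ℂ :=
  (2*(k:ℂ)*(2*(r:ℂ)-(k:ℂ)) - (r:ℂ)*(2*(r:ℂ)-1)) / (16*((r:ℂ)-1))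

/-- The spectral projectors `P_k = Π_{j≠k} (Ĉ − c_j)/(c_k − c_j)`. -/
def Pk (r k : ℕ) : Cl r ⊗[ℂ] Cl r :=
  (((List.range (r+1)).filter (fun j => j ≠ k)).map
    (fun j => (cEv r k - cEv r j)⁻¹ • (sC r - cEv r j • 1))).prod

/-- `P_r^S = (p_{++} + p_{−−})·P_r`. -/
def PrS (r : ℕ) : Cl r ⊗[ℂ] Cl r := (ppCh r 1 1 + ppCh r (-1) (-1)) * Pk r r

/-- The ascending factorial `a_k(u) = (u/2)(u/2+1)⋯(u/2+k−1)`. -/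
def asc (u : ℂ) (k : ℕ) : ℂ := ∏ j ∈ Finset.range k, (u/2 + (j:ℂ))


section Aux

lemma Qf_single (r : ℕ) (j : Fin (2*r)) : Qf r (Pi.single j 1) = 1 := by
  simp [Qf, QuadraticMap.weightedSumSquares_apply, Pi.single_apply]

lemma gen_sq (r : ℕ) (j : Fin (2*r)) : Γgen r j * Γgen r j = 1 := by
  rw [Γgen, CliffordAlgebra.ι_sq_scalar, Qf_single, map_one]

lemma gen_anticomm (r : ℕ) {a b : Fin (2*r)} (h : a ≠ b) :
    Γgen r a * Γgen r b = -(Γgen r b * Γgen r a) := by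
  have horth : (Qf r).IsOrtho (Pi.single a 1) (Pi.single b 1) := by
    rw [QuadraticMap.isOrtho_def]
    have heq : Pi.single a (1:ℂ) + Pi.single b (1:ℂ)
        = fun m => (if m = a then (1:ℂ) else 0) + (if m = b then 1 else 0) := by
      funext m; simp [Pi.single_apply]
    rw [heq, Qf_single, Qf_single]
    simp only [Qf, QuadraticMap.weightedSumSquares_apply, smul_eq_mul, one_mul]
    rw [show (1:ℂ) + 1 = ∑ m : Fin (2*r), ((if m = a then (1:ℂ) else 0) + (if m = b then 1 else 0)) by
      rw [Finset.sum_add_distrib]; simp]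
    refine Finset.sum_congr rfl fun m _ => ?_
    rcases eq_or_ne m a with rfl|ha <;> rcases eq_or_ne m b with rfl|hb <;> simp_all
  have h2 := CliffordAlgebra.ι_mul_ι_add_swap_of_isOrtho horth
  rw [Γgen, Γgen]
  exact eq_neg_of_add_eq_zero_left h2

lemma gen_mul_list (r : ℕ) (j : Fin (2*r)) (l : List (Fin (2*r))) :
    Γgen r j * (l.map (Γgen r)).prod
      = (-1:ℂ)^(l.countP (fun a => a ≠ j)) • ((l.map (Γgen r)).prod * Γgen r j) := by
  induction l with
  | nil => simp
  | cons a l ih =>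
    set P := (l.map (Γgen r)).prod with hP
    set c := l.countP (fun a => a ≠ j) with hc
    rcases eq_or_ne a j with rfl|ha
    · have hcnt : (a :: l).countP (fun x => x ≠ a) = c := by simp [List.countP_cons, hc]
      calc Γgen r a * ((a::l).map (Γgen r)).prod
          = Γgen r a * (Γgen r a * P) := by simp [hP]
        _ = Γgen r a * ((-1:ℂ)^c • (P * Γgen r a)) := by rw [ih]
        _ = (-1:ℂ)^c • (Γgen r a * P * Γgen r a) := by
            rw [mul_smul_comm, mul_assoc]
        _ = (-1:ℂ)^((a::l).countP (fun x => x ≠ a)) • (((a::l).map (Γgen r)).prod * Γgen r a) := by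
            rw [hcnt]; simp [hP]
    · have hcnt : (a :: l).countP (fun x => x ≠ j) = c + 1 := by simp [List.countP_cons, hc, ha]
      calc Γgen r j * ((a::l).map (Γgen r)).prod
          = (Γgen r j * Γgen r a) * P := by simp [hP, mul_assoc]
        _ = -(Γgen r a * (Γgen r j * P)) := by rw [gen_anticomm r (Ne.symm ha)]; rw [neg_mul, mul_assoc]
        _ = -(Γgen r a * ((-1:ℂ)^c • (P * Γgen r j))) := by rw [ih]
        _ = (-1:ℂ)^(c+1) • (Γgen r a * P * Γgen r j) := by
            rw [mul_smul_comm, ← smul_neg, pow_succ, mul_comm ((-1:ℂ)^c), mul_smul, mul_assoc]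
            simp
        _ = (-1:ℂ)^((a::l).countP (fun x => x ≠ j)) • (((a::l).map (Γgen r)).prod * Γgen r j) := by
            rw [hcnt]; simp [hP]

lemma gen_conj_list (r : ℕ) (j : Fin (2*r)) (l : List (Fin (2*r))) :
    Γgen r j * (l.map (Γgen r)).prod * Γgen r j
      = (-1:ℂ)^(l.countP (fun a => a ≠ j)) • (l.map (Γgen r)).prod := by
  rw [gen_mul_list, smul_mul_assoc, mul_assoc, gen_sq, mul_one]

lemma conj_Γbr (r k : ℕ) (i : Fin k → Fin (2*r)) (j : Fin (2*r)) :
    Γgen r j * Γbr r k i * Γgen r j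
      = (-1:ℂ)^((List.ofFn i).countP (fun a => a ≠ j)) • Γbr r k i := by
  have key : ∀ σ : Equiv.Perm (Fin k),
      Γgen r j * (((Equiv.Perm.sign σ : ℤ) : ℂ) • (List.ofFn fun m => Γgen r (i (σ m))).prod)
        * Γgen r j
      = (-1:ℂ)^((List.ofFn i).countP (fun a => a ≠ j)) •
        (((Equiv.Perm.sign σ : ℤ) : ℂ) • (List.ofFn fun m => Γgen r (i (σ m))).prod) := by
    intro σ
    have hP : (List.ofFn fun m => Γgen r (i (σ m))) = (List.ofFn (i ∘ σ)).map (Γgen r) := by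
      rw [List.map_ofFn]; rfl
    have hcnt : (List.ofFn (i ∘ σ)).countP (fun a => a ≠ j)
        = (List.ofFn i).countP (fun a => a ≠ j) :=
      (Equiv.Perm.ofFn_comp_perm σ i).countP_eq _
    rw [mul_smul_comm, smul_mul_assoc, hP, gen_conj_list, hcnt, smul_comm]
  rw [Γbr, mul_smul_comm, smul_mul_assoc, Finset.mul_sum, Finset.sum_mul]
  rw [Finset.sum_congr rfl (fun σ _ => key σ), ← Finset.smul_sum, smul_comm]

lemma Γbr_eq_zero (r k : ℕ) (i : Fin k → Fin (2*r)) (h : ¬ Function.Injective i) :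
    Γbr r k i = 0 := by
  obtain ⟨a, b, hab, hne⟩ : ∃ a b, i a = i b ∧ a ≠ b := by
    simp only [Function.Injective, not_forall] at h
    obtain ⟨a, b, h1, h2⟩ := h; exact ⟨a, b, h1, h2⟩
  set τ := Equiv.swap a b with hτ
  have hiτ : ∀ x, i (τ x) = i x := by
    intro x
    rcases eq_or_ne x a with rfl|hxa
    · rw [hτ, Equiv.swap_apply_left, hab]
    rcases eq_or_ne x b with rfl|hxb
    · rw [hτ, Equiv.swap_apply_right, hab]
    · rw [hτ, Equiv.swap_apply_of_ne_of_ne hxa hxb]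
  set F : Equiv.Perm (Fin k) → Cl r := fun σ =>
    ((Equiv.Perm.sign σ : ℤ) : ℂ) • (List.ofFn fun m => Γgen r (i (σ m))).prod with hF
  have hFτ : ∀ σ, F (τ * σ) = -F σ := by
    intro σ
    have h1 : (List.ofFn fun m => Γgen r (i ((τ * σ) m)))
        = (List.ofFn fun m => Γgen r (i (σ m))) := by
      congr 1; funext m; rw [Equiv.Perm.mul_apply, hiτ]
    have h2 : ((Equiv.Perm.sign (τ * σ) : ℤ) : ℂ) = -((Equiv.Perm.sign σ : ℤ) : ℂ) := by
      rw [map_mul, hτ, Equiv.Perm.sign_swap hne]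
      push_cast; ring
    rw [hF]; simp only [h1, h2, neg_smul]
  have hS : ∑ σ : Equiv.Perm (Fin k), F σ = -∑ σ : Equiv.Perm (Fin k), F σ := by
    calc ∑ σ : Equiv.Perm (Fin k), F σ
        = ∑ σ : Equiv.Perm (Fin k), F (τ * σ) :=
          (Fintype.sum_equiv (Equiv.mulLeft τ) _ _ (fun σ => rfl)).symm
      _ = ∑ σ : Equiv.Perm (Fin k), -F σ := by simp only [hFτ]
      _ = -∑ σ : Equiv.Perm (Fin k), F σ := by rw [Finset.sum_neg_distrib]
  have hS0 : ∑ σ : Equiv.Perm (Fin k), F σ = 0 := by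
    have h2 : (2:ℂ) • ∑ σ : Equiv.Perm (Fin k), F σ = 0 := by
      rw [two_smul]; nth_rewrite 2 [hS]; simp
    simpa using (smul_eq_zero.mp h2).resolve_left two_ne_zero
  rw [Γbr, hS0, smul_zero]

lemma countP_ne_add_count {α : Type*} [DecidableEq α] (j : α) (l : List α) :
    l.countP (fun a => a ≠ j) + l.count j = l.length := by
  have hlen := List.length_eq_countP_add_countP (fun a => a = j) (l := l)
  rw [List.count, hlen]
  have h1 : l.countP (fun a => a ≠ j) = l.countP (fun a => !decide (a = j)) := by
    apply List.countP_congr; intro a _; simp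
  have h2 : l.countP (· == j) = l.countP (fun a => decide (a = j)) := by
    apply List.countP_congr; intro a _; simp
  have h3 : l.countP (fun a => !decide (a = j))
      = l.countP (fun a => decide ¬(decide (a = j) = true)) :=
    List.countP_congr (fun a _ => by simp)
  omega

lemma sum_counts (k n : ℕ) (i : Fin k → Fin n) :
    ∑ j : Fin n, (List.ofFn i).count j = k := by
  have := Multiset.sum_count_eq_card (s := (Finset.univ : Finset (Fin n))) (m := ↑(List.ofFn i)) (fun a _ => Finset.mem_univ a)
  simpa [List.length_ofFn] using this

lemma exists_even_count {r k : ℕ} (hko : Odd k) (i : Fin k → Fin (2*r)) :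
    ∃ j : Fin (2*r), Even ((List.ofFn i).count j) := by
  by_contra h
  push_neg at h
  simp only [Nat.not_even_iff_odd] at h
  have hsum := sum_counts k (2*r) i
  have hz : ((k : ZMod 2)) = 0 := by
    rw [← hsum]
    push_cast
    rw [Finset.sum_congr rfl (fun j _ => by
      rw [show (((List.ofFn i).count j : ZMod 2)) = 1 from by
        have := (Nat.odd_iff).mp (h j)
        rw [← ZMod.natCast_mod, this]; rfl])]
    rw [Finset.sum_const, Finset.card_fin, nsmul_eq_mul, mul_one]
    push_cast
    rw [show ((2:ZMod 2)) = 0 from rfl]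
    ring
  rw [show ((k:ZMod 2)) = 1 from by
    rw [← ZMod.natCast_mod, Nat.odd_iff.mp hko]; rfl] at hz
  exact one_ne_zero hz

end Aux

/-- the matrices representing `Γ_{[i₁…i_k]}`, `1 ≤ k ≤ 2r`, are traceless. -/
theorem Γbr_traceless (r : ℕ) (hr : 2 ≤ r)
    (φ : Cl r ≃ₐ[ℂ] Matrix (Fin (2^r)) (Fin (2^r)) ℂ)
    (k : ℕ) (hk1 : 1 ≤ k) (hk2 : k ≤ 2*r) (i : Fin k → Fin (2*r)) :
    Matrix.trace (φ (Γbr r k i)) = 0 := by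
  have key : ∀ j : Fin (2*r), Odd ((List.ofFn i).countP (fun a => a ≠ j)) →
      Matrix.trace (φ (Γbr r k i)) = 0 := by
    intro j hodd
    have hc := conj_Γbr r k i j
    rw [Odd.neg_one_pow hodd, neg_one_smul] at hc
    have h1 : φ (Γgen r j) * φ (Γbr r k i) * φ (Γgen r j) = -(φ (Γbr r k i)) := by
      rw [← map_mul, ← map_mul, hc, map_neg]
    have h2 : Matrix.trace (φ (Γgen r j) * φ (Γbr r k i) * φ (Γgen r j))
        = Matrix.trace (φ (Γbr r k i)) := by
      rw [Matrix.trace_mul_cycle, ← map_mul, gen_sq, map_one, one_mul]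
    rw [h1, Matrix.trace_neg] at h2
    have h3 : (2:ℂ) * Matrix.trace (φ (Γbr r k i)) = 0 := by linear_combination -h2
    exact (mul_eq_zero.mp h3).resolve_left two_ne_zero
  have hcnt := fun j : Fin (2*r) => countP_ne_add_count j (List.ofFn i)
  simp only [List.length_ofFn] at hcnt
  rcases Nat.even_or_odd k with hke|hko
  · by_cases hinj : Function.Injective i
    · set j := i ⟨0, hk1⟩ with hj
      have hmem : j ∈ List.ofFn i := List.mem_ofFn.mpr ⟨⟨0, hk1⟩, rfl⟩
      have hone : (List.ofFn i).count j = 1 :=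
        List.count_eq_one_of_mem (List.nodup_ofFn.mpr hinj) hmem
      refine key j ?_
      have := hcnt j
      rw [Nat.odd_iff]
      rw [Nat.even_iff] at hke
      omega
    · rw [Γbr_eq_zero r k i hinj, map_zero, Matrix.trace_zero]
  · obtain ⟨j, hj⟩ := exists_even_count hko i
    refine key j ?_
    have := hcnt j
    rw [Nat.odd_iff]
    rw [Nat.even_iff] at hj
    rw [Nat.odd_iff] at hko
    omega

end
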